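/- Converse of the 3-CSRA reduction: in the bipartite set-cover graph with r = |F| ≥ 3 and empty trusted set, if F cannot be partitioned into three disjoint covers of U and no single F_j equals U for all j (i.e., |F| ≥ 3 with not all subsets equal to U), then for every coloring Δ : V → {1,2,3}, G is not strongly (r,Δ,∅)-robust with respect to S = F̄. -/

import Mathlib

open Finset

def threeColors {V Γ : Type*} (Δ : V → Γ) (F : Finset V) : Prop :=
  ∃ u ∈ F, ∃ v ∈ F, ∃ w ∈ F, Δ u ≠ Δ v ∧ Δ v ≠ Δ w ∧ Δ u ≠ Δ w

def reachable {V Γ : Type*} [DecidableEq V] (N : V → Finset V) (Δ : V → Γ)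
    (T : Finset V) (r : ℕ) (C : Finset V) : Prop :=
  ∃ i ∈ C, r ≤ ((N i) \ C).card ∨ threeColors Δ ((N i) \ C) ∨ ∃ t ∈ (N i) \ C, t ∈ T

def strongRobust {V Γ : Type*} [Fintype V] [DecidableEq V] (N : V → Finset V) (Δ : V → Γ)
    (T : Finset V) (r : ℕ) (S : Finset V) : Prop :=
  ∀ C : Finset V, C.Nonempty → C ⊆ Sᶜ → reachable N Δ T r C

/-- The bipartite graph of the set-cover reduction: edge from `f_j` to `u_i` iff `i ∈ F j`. -/
def scNbhd (p m : ℕ) (F : Fin m → Finset (Fin p)) :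
    (Fin p ⊕ Fin m) → Finset (Fin p ⊕ Fin m) :=
  Sum.elim
    (fun i => (Finset.univ.filter fun j => i ∈ F j).image Sum.inr)
    (fun _ => ∅)

/-- The source set `F̄` of the set-cover reduction. -/
def scSource (p m : ℕ) : Finset (Fin p ⊕ Fin m) :=
  Finset.univ.image Sum.inr

lemma fin3_cover : ∀ a b d c : Fin 3, a ≠ b → b ≠ d → a ≠ d →
    a = c ∨ b = c ∨ d = c := by decide

theorem stmt17 (p m : ℕ) (F : Fin m → Finset (Fin p)) (hm : 3 ≤ m)
    -- `F` cannot be partitioned into three disjoint covers of `U`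
    (hnocover : ∀ P : Fin m → Fin 3, ∃ c : Fin 3, ∃ i : Fin p,
      ∀ j : Fin m, P j = c → i ∉ F j) :
    ∀ Δ : (Fin p ⊕ Fin m) → Fin 3,
      ¬ strongRobust (scNbhd p m F) Δ (∅ : Finset (Fin p ⊕ Fin m)) m (scSource p m) := by
  intro Δ hrob
  have main : ∀ i : Fin p,
      m ≤ ((Finset.univ.filter fun j => i ∈ F j)).card ∨
      threeColors Δ ((Finset.univ.filter fun j => i ∈ F j).image Sum.inr) := by
    intro i
    have hC : ({Sum.inl i} : Finset (Fin p ⊕ Fin m)) ⊆ (scSource p m)ᶜ := by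
      intro x hx
      simp only [Finset.mem_singleton] at hx
      subst hx
      simp [scSource]
    obtain ⟨x, hxC, hx⟩ := hrob {Sum.inl i} ⟨_, Finset.mem_singleton_self _⟩ hC
    simp only [Finset.mem_singleton] at hxC; subst hxC
    have hN : scNbhd p m F (Sum.inl i) \ {Sum.inl i} =
        (Finset.univ.filter fun j => i ∈ F j).image Sum.inr := by
      rw [Finset.sdiff_singleton_eq_erase, Finset.erase_eq_of_notMem]
      · rfl
      · simp [scNbhd]
    rw [hN] at hx
    rcases hx with h | h | ⟨t, _, ht⟩
    · left
      rwa [Finset.card_image_of_injective _ Sum.inr_injective] at h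
    · right; exact h
    · simp at ht
  by_cases hsurj : ∀ c : Fin 3, ∃ j : Fin m, Δ (Sum.inr j) = c
  · -- all three colors appear on F̄
    obtain ⟨c, i, hmiss⟩ := hnocover (fun j => Δ (Sum.inr j))
    rcases main i with h | h
    · -- i ∈ F j for all j, contradiction with the j colored c
      obtain ⟨j, hj⟩ := hsurj c
      have hall : (Finset.univ.filter fun j => i ∈ F j) = Finset.univ := by
        apply Finset.eq_univ_of_card
        refine le_antisymm (Finset.card_le_univ _) ?_
        simpa using h
      have : i ∈ F j := by
        have := Finset.mem_univ j
        rw [← hall, Finset.mem_filter] at this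
        exact this.2
      exact hmiss j hj this
    · obtain ⟨u, hu, v, hv, w, hw, h1, h2, h3⟩ := h
      have key : ∀ x ∈ (Finset.univ.filter fun j => i ∈ F j).image Sum.inr,
          Δ x ≠ c := by
        intro x hx hc
        obtain ⟨j, hj, rfl⟩ := Finset.mem_image.mp hx
        exact hmiss j hc (Finset.mem_filter.mp hj).2
      rcases fin3_cover (Δ u) (Δ v) (Δ w) c h1 h2 h3 with h | h | h
      · exact key u hu h
      · exact key v hv h
      · exact key w hw h
  · -- some color never appears on F̄
    push_neg at hsurj
    obtain ⟨c, hc⟩ := hsurj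
    -- threeColors is impossible, so every i is in every F j
    have hall : ∀ i : Fin p, ∀ j : Fin m, i ∈ F j := by
      intro i j
      rcases main i with h | h
      · have hall : (Finset.univ.filter fun j => i ∈ F j) = Finset.univ := by
          apply Finset.eq_univ_of_card
          refine le_antisymm (Finset.card_le_univ _) ?_
          simpa using h
        have := Finset.mem_univ j
        rw [← hall, Finset.mem_filter] at this
        exact this.2
      · obtain ⟨u, hu, v, hv, w, hw, h1, h2, h3⟩ := h
        exfalso
        have key : ∀ x ∈ (Finset.univ.filter fun j => i ∈ F j).image Sum.inr,
            Δ x ≠ c := by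
          intro x hx hc'
          obtain ⟨j', hj', rfl⟩ := Finset.mem_image.mp hx
          exact hc j' hc'
        rcases fin3_cover (Δ u) (Δ v) (Δ w) c h1 h2 h3 with h | h | h
        · exact key u hu h
        · exact key v hv h
        · exact key w hw h
    -- contradiction with hnocover via a surjective partition
    obtain ⟨c', i, hmiss⟩ := hnocover (fun j => ⟨j.val % 3, Nat.mod_lt _ (by omega)⟩)
    have hj0 : (c'.val : ℕ) < m := lt_of_lt_of_le c'.isLt hm
    have := hmiss ⟨c'.val, hj0⟩ (by
      ext
      simp [Nat.mod_eq_of_lt c'.isLt])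
    exact this (hall i _)
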